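/- Let k be a nonzero integer, let m, n ∈ ℕ, and let A be a complex (2^{2+n}) × (2^{2+m}) matrix. For α ∈ ℝ let r(α) = (1, e^{ikα})ᵀ and define the 2^n × 2^m matrix Q(α) = ((r(−α)ᵀ ⊗ r(−α)ᵀ) ⊗ I_{2^n}) · A · ((r(α) ⊗ r(α)) ⊗ I_{2^m}). Then (1/(2π)) · ∫_{−π}^{π} Q(α) dα = (⟨00| ⊗ I_{2^n}) A (|00⟩ ⊗ I_{2^m}) + (⟨11| ⊗ I_{2^n}) A (|11⟩ ⊗ I_{2^m}) + ((⟨01| + ⟨10|) ⊗ I_{2^n}) A ((|01⟩ + |10⟩) ⊗ I_{2^m}), where for x,y ∈ {0,1}, |xy⟩ = |x⟩ ⊗ |y⟩ and ⟨xy| is its transpose. -/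

import Mathlib

open Matrix MeasureTheory
open scoped Kronecker

noncomputable section

/-- Standard basis kets of `ℂ²` as `2 × 1` column matrices. -/
def ket (x : Fin 2) : Matrix (Fin 2) (Fin 1) ℂ := fun i _ => if i = x then 1 else 0

/-- The column `r(α) = (1, e^{ikα})ᵀ`. -/
def r (k : ℤ) (α : ℝ) : Matrix (Fin 2) (Fin 1) ℂ :=
  !![1; Complex.exp (Complex.I * (k : ℂ) * (α : ℂ))]

lemma integral_exp_I (c : ℤ) :
    (∫ α in (-Real.pi)..Real.pi, Complex.exp (Complex.I * c * α)) =
      if c = 0 then 2 * Real.pi else 0 := by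
  by_cases h : c = 0
  · simp [h, two_mul]
  · rw [if_neg h]
    have hc : (Complex.I * c) ≠ 0 := by
      simp [Complex.I_ne_zero, Complex.ext_iff]
      exact_mod_cast h
    rw [show (fun α : ℝ => Complex.exp (Complex.I * c * α)) =
        fun α : ℝ => Complex.exp ((Complex.I * c) * α) from rfl]
    rw [integral_exp_mul_complex hc]
    have : Complex.exp (Complex.I * c * (Real.pi : ℂ)) =
        Complex.exp (Complex.I * c * ((-Real.pi : ℝ) : ℂ)) := by
      have h2 : (Complex.I * c * (Real.pi : ℂ)) =
          Complex.I * c * ((-Real.pi : ℝ) : ℂ) + c * (2 * Real.pi * Complex.I) := by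
        push_cast; ring
      rw [h2, Complex.exp_add, Complex.exp_int_mul_two_pi_mul_I, mul_one]
    rw [this]
    simp

lemma avg_term (k : ℤ) (hk : k ≠ 0) (p q : ℕ) (C : ℂ) :
    (1 / (2 * Real.pi) : ℂ) *
      ∫ α in (-Real.pi)..Real.pi,
        (Complex.exp (Complex.I * k * ((-α : ℝ) : ℂ) * (p : ℂ)) *
         Complex.exp (Complex.I * k * (α : ℂ) * (q : ℂ))) * C
    = (if p = q then 1 else 0) * C := by
  have hfun : ∀ α : ℝ,
      (Complex.exp (Complex.I * k * ((-α : ℝ) : ℂ) * (p : ℂ)) *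
        Complex.exp (Complex.I * k * (α : ℂ) * (q : ℂ))) * C
      = Complex.exp (Complex.I * ((k * ((q : ℤ) - (p : ℤ)) : ℤ) : ℂ) * α) * C := by
    intro α
    rw [← Complex.exp_add]
    push_cast
    ring_nf
  simp only [hfun]
  rw [intervalIntegral.integral_mul_const, integral_exp_I]
  have hiff : (k * ((q : ℤ) - (p : ℤ)) = 0) ↔ (p = q) := by
    rw [mul_eq_zero, sub_eq_zero]
    constructor
    · rintro (h | h); · exact absurd h hk
      exact_mod_cast h.symm
    · intro h; right; exact_mod_cast h.symm
  by_cases h : p = q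
  · rw [if_pos h, if_pos (hiff.mpr h)]
    have hπ : (Real.pi : ℂ) ≠ 0 := by exact_mod_cast Real.pi_ne_zero
    field_simp
    simp
  · rw [if_neg h, if_neg (fun hh => h (hiff.mp hh))]
    simp

/-- integration over a parameter with two positive and two
negative occurrences (entrywise integration). -/
theorem integrate_two_occurrences (k : ℤ) (hk : k ≠ 0) (m n : ℕ)
    (A : Matrix ((Fin 2 × Fin 2) × Fin (2 ^ n)) ((Fin 2 × Fin 2) × Fin (2 ^ m)) ℂ) :
    ∀ (i : (Fin 1 × Fin 1) × Fin (2 ^ n)) (j : (Fin 1 × Fin 1) × Fin (2 ^ m)),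
      (1 / (2 * Real.pi) : ℂ) *
        (∫ α in (-Real.pi)..Real.pi,
          ((((r k (-α))ᵀ ⊗ₖ (r k (-α))ᵀ) ⊗ₖ (1 : Matrix (Fin (2 ^ n)) (Fin (2 ^ n)) ℂ)) * A *
            ((r k α ⊗ₖ r k α) ⊗ₖ (1 : Matrix (Fin (2 ^ m)) (Fin (2 ^ m)) ℂ))) i j) =
      (((ket 0 ⊗ₖ ket 0)ᵀ ⊗ₖ (1 : Matrix (Fin (2 ^ n)) (Fin (2 ^ n)) ℂ)) * A *
          ((ket 0 ⊗ₖ ket 0) ⊗ₖ (1 : Matrix (Fin (2 ^ m)) (Fin (2 ^ m)) ℂ)) +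
        ((ket 1 ⊗ₖ ket 1)ᵀ ⊗ₖ (1 : Matrix (Fin (2 ^ n)) (Fin (2 ^ n)) ℂ)) * A *
          ((ket 1 ⊗ₖ ket 1) ⊗ₖ (1 : Matrix (Fin (2 ^ m)) (Fin (2 ^ m)) ℂ)) +
        ((ket 0 ⊗ₖ ket 1 + ket 1 ⊗ₖ ket 0)ᵀ ⊗ₖ (1 : Matrix (Fin (2 ^ n)) (Fin (2 ^ n)) ℂ)) * A *
          ((ket 0 ⊗ₖ ket 1 + ket 1 ⊗ₖ ket 0) ⊗ₖ (1 : Matrix (Fin (2 ^ m)) (Fin (2 ^ m)) ℂ))) i j := by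
  intro i j
  have rdec : ∀ β : ℝ, r k β = ket 0 + Complex.exp (Complex.I * k * β) • ket 1 := by
    intro β; ext a b; fin_cases a <;> fin_cases b <;> simp [r, ket]
  have epow : ∀ (c : ℕ) (z : ℂ), Complex.exp (z * (c : ℕ)) = Complex.exp z ^ c := by
    intro c z; rw [mul_comm, Complex.exp_nat_mul]
  have key : ∀ α : ℝ,
      ((((r k (-α))ᵀ ⊗ₖ (r k (-α))ᵀ) ⊗ₖ (1 : Matrix (Fin (2 ^ n)) (Fin (2 ^ n)) ℂ)) * A *
          ((r k α ⊗ₖ r k α) ⊗ₖ (1 : Matrix (Fin (2 ^ m)) (Fin (2 ^ m)) ℂ))) i j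
      = ∑ t : (Fin 2 × Fin 2) × Fin 2 × Fin 2,
          (Complex.exp (Complex.I * k * ((-α : ℝ) : ℂ) * ((t.1.1.val + t.1.2.val : ℕ) : ℂ)) *
           Complex.exp (Complex.I * k * (α : ℂ) * ((t.2.1.val + t.2.2.val : ℕ) : ℂ))) *
          ((((ket t.1.1 ⊗ₖ ket t.1.2)ᵀ ⊗ₖ (1 : Matrix (Fin (2 ^ n)) (Fin (2 ^ n)) ℂ)) * A *
              ((ket t.2.1 ⊗ₖ ket t.2.2) ⊗ₖ (1 : Matrix (Fin (2 ^ m)) (Fin (2 ^ m)) ℂ))) i j) := by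
    intro α
    rw [rdec, rdec]
    simp only [Fintype.sum_prod_type, Fin.sum_univ_two, Fin.val_zero, Fin.val_one, epow,
      Nat.add_zero, Nat.zero_add, Nat.reduceAdd, pow_zero, pow_one, one_mul, mul_one,
      Matrix.transpose_add, Matrix.transpose_smul, Matrix.add_kronecker, Matrix.kronecker_add,
      Matrix.smul_kronecker, Matrix.kronecker_smul, Matrix.add_mul, Matrix.mul_add,
      Matrix.smul_mul, Matrix.mul_smul, Matrix.add_apply, Matrix.smul_apply, smul_eq_mul,
      ← Matrix.kroneckerMap_transpose]
    ring
  simp only [key]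
  rw [intervalIntegral.integral_finset_sum (fun t _ => by
    apply Continuous.intervalIntegrable
    fun_prop)]
  rw [Finset.mul_sum]
  simp only [avg_term k hk]
  simp only [Fintype.sum_prod_type, Fin.sum_univ_two, Fin.val_zero, Fin.val_one]
  norm_num
  simp only [Matrix.transpose_add, Matrix.add_kronecker, Matrix.add_mul, Matrix.mul_add,
    Matrix.add_apply]
  ring
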